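/- Let V be a subspace of 𝔽_q[x₁,…,x_m] with property (*). Define N_q : V → ℕ by N_q(f) = |{α ∈ 𝔽_q^m : f(α) = 0}|. Then the symmetric matrix A indexed by V × V with entries A(f,f') = N_q(f − f') has exactly the eigenvalues q^(dim V + m − 1), q^(dim V − 1), and 0, with multiplicities 1, (q−1)·q^m, and |V| − (q−1)·q^m − 1, respectively. -/

import Mathlib

open Polynomial Matrix Finset

section SpectralToolkit
variable {n : Type*} [Fintype n] [DecidableEq n]

private lemma pig_charpoly_diagonal (v : n → ℝ) :
    (Matrix.diagonal v).charpoly = ∏ i, (X - C (v i)) := by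
  have h : charmatrix (Matrix.diagonal v) = Matrix.diagonal fun i => X - C (v i) := by
    ext i j
    rcases eq_or_ne i j with rfl | hij
    · simp [charmatrix_apply_eq]
    · simp [charmatrix_apply_ne _ _ _ hij, Matrix.diagonal_apply_ne _ hij]
  rw [Matrix.charpoly, h, Matrix.det_diagonal]

private lemma pig_charpoly_conj (P Q D : Matrix n n ℝ) (hPQ : P * Q = 1) (hQP : Q * P = 1) :
    (P * D * Q).charpoly = D.charpoly := by
  have hmap : ∀ M N : Matrix n n ℝ, (M * N).map (C : ℝ →+* ℝ[X]) = M.map C * N.map C :=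
    fun M N => Matrix.map_mul
  have key : charmatrix (P * D * Q) = P.map C * charmatrix D * Q.map C := by
    rw [charmatrix, charmatrix, mul_sub, sub_mul]
    congr 1
    · rw [Matrix.scalar_apply, ← Matrix.smul_one_eq_diagonal, Matrix.mul_smul, Matrix.smul_mul,
        Matrix.mul_one, ← hmap, hPQ, Matrix.map_one _ (map_zero _) (map_one _)]
    · rw [RingHom.mapMatrix_apply, RingHom.mapMatrix_apply, ← hmap, ← hmap]
  rw [Matrix.charpoly, key, Matrix.det_mul, Matrix.det_mul, mul_comm, ← mul_assoc,
    ← Matrix.det_mul, ← hmap, hQP, Matrix.map_one _ (map_zero _) (map_one _), Matrix.det_one,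
    one_mul, Matrix.charpoly]

private lemma pig_herm_charpoly {A : Matrix n n ℝ} (hA : A.IsHermitian) :
    A.charpoly = ∏ i, (X - C (hA.eigenvalues i)) := by
  have hre : (RCLike.ofReal ∘ hA.eigenvalues : n → ℝ) = hA.eigenvalues := by
    funext i; simp
  conv_lhs => rw [hA.spectral_theorem]
  rw [Unitary.conjStarAlgAut_apply, pig_charpoly_conj _ _ _ (Matrix.mem_unitaryGroup_iff.mp (hA.eigenvectorUnitary).2)
    (Matrix.mem_unitaryGroup_iff'.mp (hA.eigenvectorUnitary).2), hre, pig_charpoly_diagonal]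

private lemma pig_herm_trace {A : Matrix n n ℝ} (hA : A.IsHermitian) :
    A.trace = ∑ i, hA.eigenvalues i := by
  have hre : (RCLike.ofReal ∘ hA.eigenvalues : n → ℝ) = hA.eigenvalues := by
    funext i; simp
  have hstar : (star (hA.eigenvectorUnitary : Matrix n n ℝ)) * hA.eigenvectorUnitary = 1 :=
    Unitary.coe_star_mul_self _
  conv_lhs => rw [hA.spectral_theorem]
  rw [Unitary.conjStarAlgAut_apply, Matrix.trace_mul_comm, ← Matrix.mul_assoc, hstar, Matrix.one_mul, hre,
    Matrix.trace_diagonal]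

private lemma pig_herm_sq {A : Matrix n n ℝ} (hA : A.IsHermitian) :
    A * A = (hA.eigenvectorUnitary : Matrix n n ℝ) *
      (Matrix.diagonal (fun i => hA.eigenvalues i ^ 2)) *
      star (hA.eigenvectorUnitary : Matrix n n ℝ) := by
  have hre : (RCLike.ofReal ∘ hA.eigenvalues : n → ℝ) = hA.eigenvalues := by
    funext i; simp
  have hstar : (star (hA.eigenvectorUnitary : Matrix n n ℝ)) * hA.eigenvectorUnitary = 1 :=
    Unitary.coe_star_mul_self _
  conv_lhs => rw [hA.spectral_theorem, hre]
  simp only [Unitary.conjStarAlgAut_apply, Matrix.mul_assoc]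
  rw [show (star (hA.eigenvectorUnitary : Matrix n n ℝ)) *
      ((hA.eigenvectorUnitary : Matrix n n ℝ) *
        (Matrix.diagonal hA.eigenvalues *
          star (hA.eigenvectorUnitary : Matrix n n ℝ))) =
      Matrix.diagonal hA.eigenvalues *
        star (hA.eigenvectorUnitary : Matrix n n ℝ) from by
    rw [← Matrix.mul_assoc, hstar, Matrix.one_mul]]
  congr 1
  rw [← Matrix.mul_assoc, Matrix.diagonal_mul_diagonal]
  simp [sq]

private lemma pig_herm_trace_sq {A : Matrix n n ℝ} (hA : A.IsHermitian) :
    (A * A).trace = ∑ i, (hA.eigenvalues i) ^ 2 := by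
  have hstar : (star (hA.eigenvectorUnitary : Matrix n n ℝ)) * hA.eigenvectorUnitary = 1 :=
    Unitary.coe_star_mul_self _
  rw [pig_herm_sq hA, Matrix.trace_mul_comm, ← Matrix.mul_assoc, hstar, Matrix.one_mul,
    Matrix.trace_diagonal]

private lemma pig_eig_cubic {A : Matrix n n ℝ}
    (hA : A.IsHermitian) (b c : ℝ) (h3 : A * A * A = b • (A * A) + c • A) (i : n) :
    hA.eigenvalues i ^ 3 = b * hA.eigenvalues i ^ 2 + c * hA.eigenvalues i := by
  set v := hA.eigenvalues i with hv
  set x : n → ℝ := ⇑(hA.eigenvectorBasis i) with hxdef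
  have hx : A *ᵥ x = v • x := hA.mulVec_eigenvectorBasis i
  have hxne : x ≠ 0 := by
    intro h
    apply hA.eigenvectorBasis.toBasis.ne_zero i
    rw [OrthonormalBasis.coe_toBasis]
    ext j
    exact congrFun h j
  have h2 : (A * A) *ᵥ x = (v ^ 2) • x := by
    rw [← Matrix.mulVec_mulVec, hx, Matrix.mulVec_smul, hx, smul_smul, sq]
  have h3' : (A * A * A) *ᵥ x = (v ^ 3) • x := by
    rw [← Matrix.mulVec_mulVec, hx, Matrix.mulVec_smul, h2, smul_smul]
    congr 1
    ring
  have hxeq := congrArg (fun M => M *ᵥ x) h3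
  simp only [Matrix.add_mulVec, Matrix.smul_mulVec, h2, hx, h3'] at hxeq
  rw [smul_smul, smul_smul, ← add_smul] at hxeq
  exact smul_left_injective ℝ hxne hxeq

private lemma pig_charpoly_structure
    {A : Matrix n n ℝ} (hA : A.IsHermitian) (lam mu : ℝ) (k : ℕ)
    (hroots : ∀ i, hA.eigenvalues i = lam ∨ hA.eigenvalues i = mu ∨ hA.eigenvalues i = 0)
    (hlam0 : lam ≠ 0) (hmu0 : mu ≠ 0) (hne : lam ≠ mu)
    (htr : A.trace = lam + k * mu)
    (htr2 : (A * A).trace = lam ^ 2 + k * mu ^ 2) :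
    A.charpoly = (X - C lam) * (X - C mu) ^ k * X ^ (Fintype.card n - k - 1) := by
  classical
  have hch := pig_herm_charpoly hA
  have htreq := pig_herm_trace hA
  have htr2eq := pig_herm_trace_sq hA
  set v := hA.eigenvalues with hv
  set sl : Finset n := univ.filter fun i => v i = lam with hsl
  set sm : Finset n := univ.filter fun i => v i = mu with hsm
  set s0 : Finset n := univ.filter fun i => v i = 0 with hs0
  have hmem : ∀ {s : Finset n} (c : ℝ), s = univ.filter (fun i => v i = c) →
      ∀ i ∈ s, v i = c := by
    rintro s c rfl i hi
    exact (Finset.mem_filter.mp hi).2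
  have hd1 : Disjoint sl sm := by
    rw [Finset.disjoint_left]
    intro i hi1 hi2
    exact hne (((hmem lam hsl i hi1).symm).trans (hmem mu hsm i hi2))
  have hd2 : Disjoint (sl ∪ sm) s0 := by
    rw [Finset.disjoint_left]
    intro i hi1 hi0
    rcases Finset.mem_union.mp hi1 with h | h
    · exact hlam0 (((hmem lam hsl i h).symm).trans (hmem 0 hs0 i hi0))
    · exact hmu0 (((hmem mu hsm i h).symm).trans (hmem 0 hs0 i hi0))
  have hunion : sl ∪ sm ∪ s0 = univ := by
    apply Finset.eq_univ_of_forall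
    intro i
    simp only [hsl, hsm, hs0, Finset.mem_union, Finset.mem_filter, Finset.mem_univ, true_and]
    rcases hroots i with h | h | h <;> tauto
  have hsum_part : ∀ (g : ℝ → ℝ), ∑ i, g (v i) =
      sl.card * g lam + sm.card * g mu + s0.card * g 0 := by
    intro g
    rw [← hunion, Finset.sum_union hd2, Finset.sum_union hd1]
    have e1 : ∑ i ∈ sl, g (v i) = sl.card * g lam := by
      rw [Finset.sum_congr rfl fun i hi => by rw [hmem lam hsl i hi], Finset.sum_const,
        nsmul_eq_mul]
    have e2 : ∑ i ∈ sm, g (v i) = sm.card * g mu := by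
      rw [Finset.sum_congr rfl fun i hi => by rw [hmem mu hsm i hi], Finset.sum_const,
        nsmul_eq_mul]
    have e3 : ∑ i ∈ s0, g (v i) = s0.card * g 0 := by
      rw [Finset.sum_congr rfl fun i hi => by rw [hmem 0 hs0 i hi], Finset.sum_const,
        nsmul_eq_mul]
    rw [e1, e2, e3]
  have e1 : (sl.card : ℝ) * lam + sm.card * mu = lam + k * mu := by
    have hgp := hsum_part id
    simp only [id] at hgp
    have h0 : (s0.card : ℝ) * 0 = 0 := by ring
    rw [h0, add_zero] at hgp
    rw [← hgp, ← htreq, htr]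
  have e2 : (sl.card : ℝ) * lam ^ 2 + sm.card * mu ^ 2 = lam ^ 2 + k * mu ^ 2 := by
    have hgp := hsum_part (fun t => t ^ 2)
    beta_reduce at hgp
    have h0 : (s0.card : ℝ) * 0 ^ 2 = 0 := by ring
    rw [h0, add_zero] at hgp
    rw [← hgp, ← htr2eq, htr2]
  have key : ((sl.card : ℝ) - 1) * (lam * (lam - mu)) = 0 := by
    linear_combination e2 - mu * e1
  have hx : (sl.card : ℝ) = 1 := by
    rcases mul_eq_zero.mp key with h | h
    · linarith
    · exact absurd h (mul_ne_zero hlam0 (sub_ne_zero.mpr hne))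
  have hslcard : sl.card = 1 := by exact_mod_cast hx
  have hy : (sm.card : ℝ) = k := by
    have hmm : (sm.card : ℝ) * mu = k * mu := by
      rw [hx] at e1; linarith
    exact mul_right_cancel₀ hmu0 hmm
  have hsmcard : sm.card = k := by exact_mod_cast hy
  have hcards : sl.card + sm.card + s0.card = Fintype.card n := by
    rw [← Finset.card_union_of_disjoint hd1, ← Finset.card_union_of_disjoint hd2, hunion,
      Finset.card_univ]
  have hs0card : s0.card = Fintype.card n - k - 1 := by omega
  rw [hch, ← hunion, Finset.prod_union hd2, Finset.prod_union hd1]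
  have p1 : ∏ i ∈ sl, (X - C (v i)) = (X - C lam) := by
    rw [Finset.prod_congr rfl fun i hi => by rw [hmem lam hsl i hi], Finset.prod_const, hslcard,
      pow_one]
  have p2 : ∏ i ∈ sm, (X - C (v i)) = (X - C mu) ^ k := by
    rw [Finset.prod_congr rfl fun i hi => by rw [hmem mu hsm i hi], Finset.prod_const, hsmcard]
  have p3 : ∏ i ∈ s0, (X - C (v i)) = X ^ (Fintype.card n - k - 1) := by
    rw [Finset.prod_congr rfl fun i hi => by rw [hmem 0 hs0 i hi], Finset.prod_congr rfl
      (fun i _ => by rw [map_zero, sub_zero]), Finset.prod_const, hs0card]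
  rw [p1, p2, p3]

end SpectralToolkit

private lemma pig_card_fiber_mul {F V W : Type*} [Field F] [AddCommGroup V] [Module F V]
    [AddCommGroup W] [Module F W] [Fintype V] [Fintype W] [DecidableEq W]
    (φ : V →ₗ[F] W) (hφ : Function.Surjective φ) (w : W) :
    (Finset.univ.filter fun v => φ v = w).card * Fintype.card W = Fintype.card V := by
  have key : ∀ w1 w2 : W, (Finset.univ.filter fun v => φ v = w1).card =
      (Finset.univ.filter fun v => φ v = w2).card := by
    intro w1 w2
    obtain ⟨d, hd⟩ := hφ (w2 - w1)
    apply Finset.card_bij' (fun v _ => v + d) (fun v _ => v - d)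
    · intro a ha
      simp only [Finset.mem_filter, Finset.mem_univ, true_and] at ha ⊢
      rw [map_add, ha, hd]; abel
    · intro a ha
      simp only [Finset.mem_filter, Finset.mem_univ, true_and] at ha ⊢
      rw [map_sub, ha, hd]; abel
    · intro a _; abel
    · intro a _; abel
  have hsum : (Finset.univ : Finset V).card =
      ∑ w' : W, (Finset.univ.filter fun v => φ v = w').card :=
    Finset.card_eq_sum_card_fiberwise fun v _ => Finset.mem_univ (φ v)
  rw [Finset.card_univ] at hsum
  rw [hsum, Finset.sum_congr rfl fun w' _ => key w' w, Finset.sum_const, Finset.card_univ,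
    smul_eq_mul, mul_comm]

section Context
variable {m : ℕ} {F : Type} [Field F] [Fintype F] [DecidableEq F]
    (V : Submodule F (MvPolynomial (Fin m) F)) (I : Finset (Fin m →₀ ℕ))

/-- evaluation as a linear map on V -/
private noncomputable def pigEvalV (a : Fin m → F) : V →ₗ[F] F where
  toFun g := MvPolynomial.eval a (g : MvPolynomial (Fin m) F)
  map_add' g h := by simp
  map_smul' c g := by
    simp [Submodule.coe_smul, MvPolynomial.smul_eq_C_mul]

variable (hV : V = Submodule.span F ((fun d => MvPolynomial.monomial d (1 : F)) '' I))
  (h0 : (0 : Fin m →₀ ℕ) ∈ I)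

set_option linter.unusedSectionVars false

include hV h0 in
private lemma pig_one_mem_V : (1 : MvPolynomial (Fin m) F) ∈ V := by
  rw [hV]
  apply Submodule.subset_span
  exact ⟨0, h0, by simp [MvPolynomial.monomial_zero']⟩

include hV in
private lemma pig_mono_mem_V : ∀ d ∈ I, (MvPolynomial.monomial d (1 : F)) ∈ V := by
  intro d hd
  rw [hV]
  exact Submodule.subset_span ⟨d, hd, rfl⟩

include hV h0 in
private lemma pig_evalV_surj (a : Fin m → F) : Function.Surjective (pigEvalV V a) := by
  intro c
  refine ⟨c • ⟨1, pig_one_mem_V V I hV h0⟩, ?_⟩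
  simp [pigEvalV]

include hV h0 in
private lemma pig_count1 [Fintype V] (a : Fin m → F) (c : F) :
    (Finset.univ.filter fun g : V =>
      MvPolynomial.eval a (g : MvPolynomial (Fin m) F) = c).card * Fintype.card F
      = Fintype.card V := by
  have h := pig_card_fiber_mul (pigEvalV V a) (pig_evalV_surj V I hV h0 a) c
  convert h using 3
  ext g
  rw [Finset.mem_filter, Finset.mem_filter]
  simp [pigEvalV]

private lemma pig_pow_inj {k : ℕ} (hk : 0 < k) (hg : Nat.gcd k (Fintype.card F - 1) = 1)
    {x y : F} (h : x ^ k = y ^ k) : x = y := by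
  rcases eq_or_ne x 0 with rfl | hx
  · rw [zero_pow hk.ne', eq_comm, pow_eq_zero_iff hk.ne'] at h
    exact h.symm
  rcases eq_or_ne y 0 with rfl | hy
  · rw [zero_pow hk.ne', pow_eq_zero_iff hk.ne'] at h
    exact h
  have hcop : (Nat.card Fˣ).Coprime k := by
    rw [Nat.card_eq_fintype_card, Fintype.card_units]
    exact (Nat.coprime_comm.mp hg)
  have hinj := (Nat.Coprime.pow_left_bijective hcop).injective
  have hu : (Units.mk0 x hx) ^ k = (Units.mk0 y hy) ^ k := by
    ext
    simpa using h
  simpa using congrArg Units.val (hinj hu)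

include hV h0 in
private lemma pig_count2 [Fintype V]
    (hpure : ∀ j : Fin m, ∃ k : ℕ, 0 < k ∧ Nat.gcd k (Fintype.card F - 1) = 1 ∧
      Finsupp.single j k ∈ I) {a b : Fin m → F} (hab : a ≠ b) (s t : F) :
    (Finset.univ.filter fun g : V =>
      MvPolynomial.eval a (g : MvPolynomial (Fin m) F) = s ∧
      MvPolynomial.eval b (g : MvPolynomial (Fin m) F) = t).card * (Fintype.card F) ^ 2
      = Fintype.card V := by
  obtain ⟨j, hj⟩ := Function.ne_iff.mp hab
  obtain ⟨k, hk0, hkg, hkI⟩ := hpure j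
  set g0 : V := ⟨MvPolynomial.monomial (Finsupp.single j k) 1, pig_mono_mem_V V I hV _ hkI⟩
    with hg0
  have hevg0 : ∀ x : Fin m → F, MvPolynomial.eval x (g0 : MvPolynomial (Fin m) F) = x j ^ k := by
    intro x
    rw [hg0]
    simp [MvPolynomial.eval_monomial, Finsupp.prod_single_index]
  have huv : a j ^ k ≠ b j ^ k := fun h => hj (pig_pow_inj hk0 hkg h)
  set φ : V →ₗ[F] F × F := (pigEvalV V a).prod (pigEvalV V b) with hφ
  have hsurj : Function.Surjective φ := by
    rintro ⟨s, t⟩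
    set u := a j ^ k
    set v := b j ^ k
    set y : F := (t - s) / (v - u) with hy
    set xc : F := s - y * u with hxc
    refine ⟨xc • ⟨1, pig_one_mem_V V I hV h0⟩ + y • g0, ?_⟩
    have hyv : y * (v - u) = t - s := div_mul_cancel₀ _ (sub_ne_zero.mpr (Ne.symm huv))
    have hone : ∀ x : Fin m → F, pigEvalV V x (⟨1, pig_one_mem_V V I hV h0⟩ : V) = 1 := by
      intro x
      show MvPolynomial.eval x (1 : MvPolynomial (Fin m) F) = 1
      simp
    have hg0' : ∀ x : Fin m → F, pigEvalV V x g0 = x j ^ k := fun x => hevg0 x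
    have h1 : pigEvalV V a (xc • ⟨1, pig_one_mem_V V I hV h0⟩ + y • g0) = s := by
      rw [map_add, _root_.map_smul, _root_.map_smul, smul_eq_mul, smul_eq_mul, hone, hg0', hxc]
      ring
    have h2 : pigEvalV V b (xc • ⟨1, pig_one_mem_V V I hV h0⟩ + y • g0) = t := by
      rw [map_add, _root_.map_smul, _root_.map_smul, smul_eq_mul, smul_eq_mul, hone, hg0', hxc]
      linear_combination hyv
    exact Prod.ext h1 h2
  have h := pig_card_fiber_mul φ hsurj (s, t)
  rw [Fintype.card_prod] at h
  rw [← h, sq]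
  congr 1
  refine congrArg Finset.card (Finset.filter_congr fun g _ => ?_)
  constructor
  · rintro ⟨h1, h2⟩
    exact Prod.ext h1 h2
  · intro hgg
    exact ⟨congrArg Prod.fst hgg, congrArg Prod.snd hgg⟩

end Context

/-- Spectrum of the polynomial incidence graph: for a subspace `V` of `𝔽_q[x₁,…,x_m]` with
property (*), the symmetric matrix `A (f, f') = N_q (f − f')` has eigenvalues
`q^(dim V + m − 1)`, `q^(dim V − 1)` and `0`, with multiplicities `1`, `(q−1)·q^m`, and
`|V| − (q−1)·q^m − 1`, expressed via its characteristic polynomial. -/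
theorem stmt10 {m : ℕ} {F : Type} [Field F] [Fintype F] [DecidableEq F]
    (V : Submodule F (MvPolynomial (Fin m) F)) (I : Finset (Fin m →₀ ℕ))
    (hV : V = Submodule.span F ((fun d => MvPolynomial.monomial d (1 : F)) '' I))
    (h0 : (0 : Fin m →₀ ℕ) ∈ I)
    (hpure : ∀ j : Fin m, ∃ k : ℕ, 0 < k ∧ Nat.gcd k (Fintype.card F - 1) = 1 ∧
      Finsupp.single j k ∈ I)
    [Fintype V] [DecidableEq V] :
    (Matrix.of fun f f' : V =>
        ((Finset.univ.filter fun a : Fin m → F =>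
          MvPolynomial.eval a ((f : MvPolynomial (Fin m) F) - (f' : MvPolynomial (Fin m) F))
            = 0).card : ℝ)).charpoly =
      (Polynomial.X - Polynomial.C
          ((Fintype.card F : ℝ) ^ (Module.finrank F V + m - 1))) *
        (Polynomial.X - Polynomial.C
          ((Fintype.card F : ℝ) ^ (Module.finrank F V - 1))) ^
            ((Fintype.card F - 1) * Fintype.card F ^ m) *
        Polynomial.X ^
          (Fintype.card V - (Fintype.card F - 1) * Fintype.card F ^ m - 1) := by
  have hq2 : 2 ≤ Fintype.card F := Fintype.one_lt_card
  have hcardV : Fintype.card V = Fintype.card F ^ Module.finrank F V := Module.card_eq_pow_finrank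
  set q := Fintype.card F with hq
  set D := Module.finrank F V with hD
  set A : Matrix V V ℝ := Matrix.of fun f f' : V =>
      ((Finset.univ.filter fun a : Fin m → F =>
        MvPolynomial.eval a ((f : MvPolynomial (Fin m) F) - (f' : MvPolynomial (Fin m) F))
          = 0).card : ℝ) with hA
  rcases Nat.eq_zero_or_pos m with hm0 | hm
  · -- degenerate case m = 0
    subst hm0
    have hI : ((fun d => MvPolynomial.monomial d (1 : F)) '' (I : Set (Fin 0 →₀ ℕ))) = {1} := by
      ext p
      constructor
      · rintro ⟨d, _, rfl⟩
        rw [Subsingleton.elim d 0]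
        simp [MvPolynomial.monomial_zero']
      · rintro rfl
        exact ⟨0, h0, by simp [MvPolynomial.monomial_zero']⟩
    have hV1 : V = Submodule.span F {1} := by rw [hV, hI]
    have hD1 : D = 1 := by
      rw [hD, hV1]
      exact finrank_span_singleton one_ne_zero
    have hA1 : A = (1 : Matrix V V ℝ) := by
      ext f f'
      rcases eq_or_ne f f' with rfl | hne
      · rw [Matrix.one_apply_eq]
        show ((Finset.univ.filter fun a : Fin 0 → F =>
          MvPolynomial.eval a ((f : MvPolynomial (Fin 0) F) - f) = 0).card : ℝ) = 1
        rw [sub_self]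
        rw [Finset.filter_true_of_mem (fun a _ => by simp)]
        rw [Finset.card_univ]
        simp [Fintype.card_fun]
      · rw [Matrix.one_apply_ne hne]
        show ((Finset.univ.filter fun a : Fin 0 → F =>
          MvPolynomial.eval a ((f : MvPolynomial (Fin 0) F) - f') = 0).card : ℝ) = 0
        have hsub : ((f : MvPolynomial (Fin 0) F) - f') ∈
            Submodule.span F ({1} : Set (MvPolynomial (Fin 0) F)) := by
          rw [← hV1]; exact sub_mem f.2 f'.2
        rw [Submodule.mem_span_singleton] at hsub
        obtain ⟨c, hc⟩ := hsub
        have hcC : c • (1 : MvPolynomial (Fin 0) F) = MvPolynomial.C c := by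
          rw [MvPolynomial.smul_eq_C_mul, mul_one]
        rw [hcC] at hc
        have hc0 : c ≠ 0 := by
          intro h
          apply hne
          apply Subtype.ext
          rw [← sub_eq_zero, ← hc, h, map_zero]
        have hnone : ∀ a ∈ (Finset.univ : Finset (Fin 0 → F)),
            ¬ (MvPolynomial.eval a ((f : MvPolynomial (Fin 0) F) - f') = 0) := by
          intro a _ hh
          apply hc0
          rw [← hc] at hh
          simpa using hh
        rw [Finset.filter_false_of_mem hnone, Finset.card_empty]
        simp
    rw [hA1, ← Matrix.diagonal_one, pig_charpoly_diagonal, Finset.prod_const, Finset.card_univ,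
      hcardV, hD1]
    norm_num
    have h3 : q - (q - 1) - 1 = 0 := by omega
    rw [h3, pow_zero, mul_one, ← pow_succ']
    congr 1
    omega
  · -- main case m ≥ 1
    have hq1R : (1:ℝ) < (q:ℝ) := by exact_mod_cast hq2
    have hqR0 : (q:ℝ) ≠ 0 := by positivity
    obtain ⟨x0, x1, hx01⟩ := exists_pair_ne F
    have habne : (fun _ : Fin m => x0) ≠ (fun _ : Fin m => x1) := by
      intro h
      exact hx01 (congrFun h ⟨0, hm⟩)
    have hD2 : 2 ≤ D := by
      have hcnt := pig_count2 V I hV h0 hpure habne x0 x1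
      rw [hcardV] at hcnt
      have hpos : 1 ≤ (Finset.univ.filter fun g : V =>
          MvPolynomial.eval (fun _ : Fin m => x0) (g : MvPolynomial (Fin m) F) = x0 ∧
          MvPolynomial.eval (fun _ : Fin m => x1) (g : MvPolynomial (Fin m) F) = x1).card := by
        rcases Nat.eq_zero_or_pos (Finset.univ.filter fun g : V =>
          MvPolynomial.eval (fun _ : Fin m => x0) (g : MvPolynomial (Fin m) F) = x0 ∧
          MvPolynomial.eval (fun _ : Fin m => x1) (g : MvPolynomial (Fin m) F) = x1).card
          with hzero | hpos
        · exfalso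
          rw [hzero, zero_mul] at hcnt
          have hqD : 0 < q ^ D := pow_pos (by omega) D
          omega
        · exact hpos
      have hle : q ^ 2 ≤ q ^ D := by
        calc q ^ 2 = 1 * q ^ 2 := (one_mul _).symm
        _ ≤ (Finset.univ.filter fun g : V =>
            MvPolynomial.eval (fun _ : Fin m => x0) (g : MvPolynomial (Fin m) F) = x0 ∧
            MvPolynomial.eval (fun _ : Fin m => x1) (g : MvPolynomial (Fin m) F) = x1).card
              * q ^ 2 := Nat.mul_le_mul_right _ hpos
        _ = q ^ D := hcnt
      exact (Nat.pow_le_pow_iff_right (by omega)).mp hle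
    obtain ⟨d2, hd2⟩ : ∃ d2, D = d2 + 2 := ⟨D - 2, by omega⟩
    -- real counting lemmas
    have hc1 : ∀ (a : Fin m → F) (c : F),
        ((Finset.univ.filter fun g : V =>
          MvPolynomial.eval a (g : MvPolynomial (Fin m) F) = c).card : ℝ) = (q:ℝ) ^ (d2+1) := by
      intro a c
      have h := pig_count1 V I hV h0 a c
      rw [hcardV, hd2] at h
      have hn : (Finset.univ.filter fun g : V =>
          MvPolynomial.eval a (g : MvPolynomial (Fin m) F) = c).card = q ^ (d2+1) := by
        apply Nat.eq_of_mul_eq_mul_right (show 0 < q by omega)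
        rw [h, ← pow_succ]
      rw [hn]
      push_cast
      ring
    have hc2 : ∀ (a b : Fin m → F), a ≠ b → ∀ (s t : F),
        ((Finset.univ.filter fun g : V =>
          MvPolynomial.eval a (g : MvPolynomial (Fin m) F) = s ∧
          MvPolynomial.eval b (g : MvPolynomial (Fin m) F) = t).card : ℝ) = (q:ℝ) ^ d2 := by
      intro a b hab s t
      have h := pig_count2 V I hV h0 hpure hab s t
      rw [hcardV, hd2] at h
      have hn : (Finset.univ.filter fun g : V =>
          MvPolynomial.eval a (g : MvPolynomial (Fin m) F) = s ∧
          MvPolynomial.eval b (g : MvPolynomial (Fin m) F) = t).card = q ^ d2 := by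
        apply Nat.eq_of_mul_eq_mul_right (show 0 < q ^ 2 by positivity)
        rw [h, ← pow_add]
      rw [hn]
      push_cast
      ring
    set J : Matrix V V ℝ := Matrix.of fun _ _ : V => (1:ℝ) with hJ
    have hNsum : ∀ f f' : V, A f f' =
        ∑ a : Fin m → F, if MvPolynomial.eval a (f' : MvPolynomial (Fin m) F) =
          MvPolynomial.eval a (f : MvPolynomial (Fin m) F) then (1:ℝ) else 0 := by
      intro f f'
      show ((Finset.univ.filter fun a : Fin m → F =>
        MvPolynomial.eval a ((f : MvPolynomial (Fin m) F) - (f' : MvPolynomial (Fin m) F))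
          = 0).card : ℝ) = _
      rw [Finset.card_filter]
      push_cast
      refine Finset.sum_congr rfl fun a _ => ?_
      refine if_congr ?_ rfl rfl
      rw [map_sub, sub_eq_zero, eq_comm]
    have hcardfun : (Fintype.card (Fin m → F) : ℝ) = (q:ℝ) ^ m := by
      rw [Fintype.card_fun, Fintype.card_fin]
      push_cast
      ring
    have hrow : ∀ f : V, ∑ f' : V, A f f' = (q:ℝ) ^ (d2+1+m) := by
      intro f
      calc ∑ f' : V, A f f'
          = ∑ f' : V, ∑ a : Fin m → F,
            (if MvPolynomial.eval a (f' : MvPolynomial (Fin m) F) =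
              MvPolynomial.eval a (f : MvPolynomial (Fin m) F) then (1:ℝ) else 0) :=
            Finset.sum_congr rfl fun f' _ => hNsum f f'
        _ = ∑ a : Fin m → F, ∑ f' : V,
            (if MvPolynomial.eval a (f' : MvPolynomial (Fin m) F) =
              MvPolynomial.eval a (f : MvPolynomial (Fin m) F) then (1:ℝ) else 0) :=
            Finset.sum_comm
        _ = ∑ a : Fin m → F, ((Finset.univ.filter fun f' : V =>
            MvPolynomial.eval a (f' : MvPolynomial (Fin m) F) =
              MvPolynomial.eval a (f : MvPolynomial (Fin m) F)).card : ℝ) := by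
            refine Finset.sum_congr rfl fun a _ => ?_
            rw [Finset.sum_boole]
        _ = ∑ _a : Fin m → F, (q:ℝ) ^ (d2+1) :=
            Finset.sum_congr rfl fun a _ => hc1 a _
        _ = (q:ℝ) ^ (d2+1+m) := by
            rw [Finset.sum_const, Finset.card_univ, nsmul_eq_mul, hcardfun, ← pow_add]
            ring_nf
    have hsymE : ∀ f f' : V, A f f' = A f' f := by
      intro f f'
      show ((Finset.univ.filter fun a : Fin m → F =>
        MvPolynomial.eval a ((f : MvPolynomial (Fin m) F) - (f' : MvPolynomial (Fin m) F))
          = 0).card : ℝ) = ((Finset.univ.filter fun a : Fin m → F =>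
        MvPolynomial.eval a ((f' : MvPolynomial (Fin m) F) - (f : MvPolynomial (Fin m) F))
          = 0).card : ℝ)
      refine congrArg _ (congrArg Finset.card (Finset.filter_congr fun a _ => ?_))
      rw [← neg_sub (f' : MvPolynomial (Fin m) F) (f : MvPolynomial (Fin m) F), map_neg,
        neg_eq_zero]
    have hherm : A.IsHermitian := by
      unfold Matrix.IsHermitian
      ext f f'
      rw [Matrix.conjTranspose_apply, star_trivial]
      exact hsymE f' f
    have hAJ : A * J = ((q:ℝ) ^ (d2+1+m)) • J := by
      ext f f''
      rw [Matrix.mul_apply, Matrix.smul_apply]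
      simp only [hJ, Matrix.of_apply, mul_one, smul_eq_mul]
      exact hrow f
    have hJA : J * A = ((q:ℝ) ^ (d2+1+m)) • J := by
      ext f f''
      rw [Matrix.mul_apply, Matrix.smul_apply]
      simp only [hJ, Matrix.of_apply, one_mul, smul_eq_mul, mul_one]
      rw [Finset.sum_congr rfl fun f' _ => hsymE f' f'']
      exact hrow f''
    have hJJ : J * J = ((q:ℝ) ^ (d2+2)) • J := by
      ext f f''
      rw [Matrix.mul_apply, Matrix.smul_apply]
      simp only [hJ, Matrix.of_apply, mul_one, smul_eq_mul]
      rw [Finset.sum_const, Finset.card_univ, nsmul_eq_mul, hcardV, hd2]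
      push_cast
      ring
    have hAA : A * A = ((q:ℝ) ^ (d2+1)) • A + ((q:ℝ) ^ (d2+m) * ((q:ℝ) ^ m - 1)) • J := by
      ext f f''
      rw [Matrix.mul_apply, Matrix.add_apply, Matrix.smul_apply, Matrix.smul_apply]
      simp only [hJ, Matrix.of_apply, smul_eq_mul, mul_one]
      have key : ∑ f' : V, A f f' * A f' f'' =
          ∑ a : Fin m → F, ∑ b : Fin m → F, ((Finset.univ.filter fun g : V =>
            MvPolynomial.eval a (g : MvPolynomial (Fin m) F) =
              MvPolynomial.eval a (f : MvPolynomial (Fin m) F) ∧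
            MvPolynomial.eval b (g : MvPolynomial (Fin m) F) =
              MvPolynomial.eval b (f'' : MvPolynomial (Fin m) F)).card : ℝ) := by
        calc ∑ f' : V, A f f' * A f' f''
            = ∑ f' : V, ∑ a : Fin m → F, ∑ b : Fin m → F,
              (if MvPolynomial.eval a (f' : MvPolynomial (Fin m) F) =
                MvPolynomial.eval a (f : MvPolynomial (Fin m) F) then (1:ℝ) else 0) *
              (if MvPolynomial.eval b (f'' : MvPolynomial (Fin m) F) =
                MvPolynomial.eval b (f' : MvPolynomial (Fin m) F) then (1:ℝ) else 0) := by
              refine Finset.sum_congr rfl fun f' _ => ?_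
              rw [hNsum f f', hNsum f' f'', Finset.sum_mul_sum]
          _ = ∑ a : Fin m → F, ∑ f' : V, ∑ b : Fin m → F,
              (if MvPolynomial.eval a (f' : MvPolynomial (Fin m) F) =
                MvPolynomial.eval a (f : MvPolynomial (Fin m) F) then (1:ℝ) else 0) *
              (if MvPolynomial.eval b (f'' : MvPolynomial (Fin m) F) =
                MvPolynomial.eval b (f' : MvPolynomial (Fin m) F) then (1:ℝ) else 0) :=
              Finset.sum_comm
          _ = ∑ a : Fin m → F, ∑ b : Fin m → F, ∑ f' : V,
              (if MvPolynomial.eval a (f' : MvPolynomial (Fin m) F) =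
                MvPolynomial.eval a (f : MvPolynomial (Fin m) F) then (1:ℝ) else 0) *
              (if MvPolynomial.eval b (f'' : MvPolynomial (Fin m) F) =
                MvPolynomial.eval b (f' : MvPolynomial (Fin m) F) then (1:ℝ) else 0) :=
              Finset.sum_congr rfl fun a _ => Finset.sum_comm
          _ = _ := by
              refine Finset.sum_congr rfl fun a _ => Finset.sum_congr rfl fun b _ => ?_
              rw [← Finset.sum_boole]
              refine Finset.sum_congr rfl fun g _ => ?_
              by_cases h1 : MvPolynomial.eval a (g : MvPolynomial (Fin m) F) =
                MvPolynomial.eval a (f : MvPolynomial (Fin m) F) <;>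
                by_cases h2 : MvPolynomial.eval b (g : MvPolynomial (Fin m) F) =
                  MvPolynomial.eval b (f'' : MvPolynomial (Fin m) F)
              · simp [h1, h2]
              · have h2' : MvPolynomial.eval b (f'' : MvPolynomial (Fin m) F) ≠
                    MvPolynomial.eval b (g : MvPolynomial (Fin m) F) :=
                  fun hcon => h2 hcon.symm
                simp [h1, h2, h2']
              · simp [h1]
              · simp [h1]
      rw [key]
      have inner : ∀ a : Fin m → F, ∑ b : Fin m → F, ((Finset.univ.filter fun g : V =>
            MvPolynomial.eval a (g : MvPolynomial (Fin m) F) =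
              MvPolynomial.eval a (f : MvPolynomial (Fin m) F) ∧
            MvPolynomial.eval b (g : MvPolynomial (Fin m) F) =
              MvPolynomial.eval b (f'' : MvPolynomial (Fin m) F)).card : ℝ) =
          ((q:ℝ) ^ m - 1) * (q:ℝ) ^ d2 +
            (if MvPolynomial.eval a (f'' : MvPolynomial (Fin m) F) =
              MvPolynomial.eval a (f : MvPolynomial (Fin m) F)
              then (q:ℝ) ^ (d2+1) else 0) := by
        intro a
        rw [Finset.sum_eq_sum_sdiff_singleton_add (Finset.mem_univ a)]
        congr 1
        · rw [Finset.sum_congr rfl (fun b hb => hc2 a b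
            (fun h => (Finset.mem_sdiff.mp hb).2 (by rw [← h]; exact Finset.mem_singleton_self _))
            (MvPolynomial.eval a (f : MvPolynomial (Fin m) F))
            (MvPolynomial.eval b (f'' : MvPolynomial (Fin m) F)))]
          rw [Finset.sum_const, nsmul_eq_mul, Finset.card_sdiff_of_subset (Finset.subset_univ _),
            Finset.card_univ, Finset.card_singleton, Fintype.card_fun, Fintype.card_fin,
            Nat.cast_sub (Nat.one_le_pow _ _ (by omega))]
          push_cast
          ring
        · rcases eq_or_ne (MvPolynomial.eval a (f'' : MvPolynomial (Fin m) F))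
            (MvPolynomial.eval a (f : MvPolynomial (Fin m) F)) with heq | hne
          · rw [if_pos heq]
            have hfe : (Finset.univ.filter fun g : V =>
                MvPolynomial.eval a (g : MvPolynomial (Fin m) F) =
                  MvPolynomial.eval a (f : MvPolynomial (Fin m) F) ∧
                MvPolynomial.eval a (g : MvPolynomial (Fin m) F) =
                  MvPolynomial.eval a (f'' : MvPolynomial (Fin m) F)) =
                (Finset.univ.filter fun g : V =>
                MvPolynomial.eval a (g : MvPolynomial (Fin m) F) =
                  MvPolynomial.eval a (f : MvPolynomial (Fin m) F)) := by
              refine Finset.filter_congr fun g _ => ?_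
              rw [heq, and_self]
            rw [hfe, hc1]
          · rw [if_neg hne]
            have hfe : (Finset.univ.filter fun g : V =>
                MvPolynomial.eval a (g : MvPolynomial (Fin m) F) =
                  MvPolynomial.eval a (f : MvPolynomial (Fin m) F) ∧
                MvPolynomial.eval a (g : MvPolynomial (Fin m) F) =
                  MvPolynomial.eval a (f'' : MvPolynomial (Fin m) F)) = ∅ := by
              refine Finset.filter_false_of_mem fun g _ => ?_
              rintro ⟨hP, hQ⟩
              exact hne (hQ.symm.trans hP)
            rw [hfe, Finset.card_empty, Nat.cast_zero]
      rw [Finset.sum_congr rfl fun a _ => inner a, Finset.sum_add_distrib, Finset.sum_const,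
        Finset.card_univ, nsmul_eq_mul, hcardfun]
      have h2nd : ∑ a : Fin m → F, (if MvPolynomial.eval a (f'' : MvPolynomial (Fin m) F) =
          MvPolynomial.eval a (f : MvPolynomial (Fin m) F) then (q:ℝ) ^ (d2+1) else 0) =
          (q:ℝ) ^ (d2+1) * A f f'' := by
        rw [hNsum f f'', Finset.mul_sum]
        refine Finset.sum_congr rfl fun a _ => ?_
        split_ifs <;> ring
      rw [h2nd]
      ring
    have hlam0 : ((q:ℝ) ^ (d2+1+m)) ≠ 0 := by positivity
    have hmu0 : ((q:ℝ) ^ (d2+1)) ≠ 0 := by positivity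
    have hnelam : ((q:ℝ) ^ (d2+1+m)) ≠ ((q:ℝ) ^ (d2+1)) :=
      (pow_lt_pow_right₀ hq1R (show d2+1 < d2+1+m by omega)).ne'
    have h3 : A * A * A = (((q:ℝ)^(d2+1+m)) + ((q:ℝ)^(d2+1))) • (A * A) +
        (-(((q:ℝ)^(d2+1+m)) * ((q:ℝ)^(d2+1)))) • A := by
      rw [hAA, Matrix.add_mul, Matrix.smul_mul, Matrix.smul_mul, hJA, hAA]
      module
    have hroots : ∀ i, hherm.eigenvalues i = (q:ℝ)^(d2+1+m) ∨
        hherm.eigenvalues i = (q:ℝ)^(d2+1) ∨ hherm.eigenvalues i = 0 := by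
      intro i
      have hcub := pig_eig_cubic hherm _ _ h3 i
      have hfac : (hherm.eigenvalues i - (q:ℝ)^(d2+1+m)) *
          ((hherm.eigenvalues i - (q:ℝ)^(d2+1)) * hherm.eigenvalues i) = 0 := by
        linear_combination hcub
      rcases mul_eq_zero.mp hfac with h | h
      · exact Or.inl (by linarith [sub_eq_zero.mp h])
      · rcases mul_eq_zero.mp h with h' | h'
        · exact Or.inr (Or.inl (sub_eq_zero.mp h'))
        · exact Or.inr (Or.inr h')
    have hdiag : ∀ f : V, A f f = ((q:ℝ))^m := by
      intro f
      show ((Finset.univ.filter fun a : Fin m → F =>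
        MvPolynomial.eval a ((f : MvPolynomial (Fin m) F) - (f : MvPolynomial (Fin m) F))
          = 0).card : ℝ) = _
      rw [sub_self]
      rw [Finset.filter_true_of_mem fun a _ => by simp]
      rw [Finset.card_univ]
      exact hcardfun
    have hkcast : (((q - 1) * q ^ m : ℕ) : ℝ) = ((q:ℝ) - 1) * (q:ℝ)^m := by
      rw [Nat.cast_mul, Nat.cast_sub (by omega), Nat.cast_pow, Nat.cast_one]
    have htrA : A.trace = (q:ℝ)^(d2+1+m) + (((q - 1) * q ^ m : ℕ) : ℝ) * ((q:ℝ)^(d2+1)) := by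
      rw [Matrix.trace]
      calc ∑ i : V, A.diag i = ∑ _i : V, ((q:ℝ))^m := Finset.sum_congr rfl fun f _ => hdiag f
        _ = _ := by
          rw [Finset.sum_const, Finset.card_univ, nsmul_eq_mul, hcardV, hd2, hkcast]
          push_cast
          ring
    have htrJ : J.trace = (q:ℝ)^(d2+2) := by
      rw [Matrix.trace]
      calc ∑ i : V, J.diag i = ∑ _i : V, (1:ℝ) :=
          Finset.sum_congr rfl fun f _ => (rfl : J.diag f = 1)
        _ = _ := by
          rw [Finset.sum_const, Finset.card_univ, nsmul_eq_mul, hcardV, hd2, mul_one]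
          push_cast
          ring_nf
    have htr2A : (A * A).trace = ((q:ℝ)^(d2+1+m))^2 +
        (((q - 1) * q ^ m : ℕ) : ℝ) * ((q:ℝ)^(d2+1))^2 := by
      rw [hAA, Matrix.trace_add, Matrix.trace_smul, Matrix.trace_smul, htrA, htrJ, hkcast,
        smul_eq_mul, smul_eq_mul]
      ring
    have hfin := pig_charpoly_structure hherm ((q:ℝ)^(d2+1+m)) ((q:ℝ)^(d2+1)) ((q - 1) * q ^ m)
      hroots hlam0 hmu0 hnelam htrA htr2A
    rw [show D + m - 1 = d2 + 1 + m from by omega, show D - 1 = d2 + 1 from by omega]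
    exact hfin
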